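/- The assignment σᵢ ↦ I₂^{⊗(i−1)} ⊗ R ⊗ I₂^{⊗(n−i−1)} extends to a group homomorphism from the braid group Bₙ to GL(2ⁿ, ℂ), i.e., these matrices satisfy the braid relations: they commute for |i−j| ≥ 2 and satisfy πₙ(σᵢ)πₙ(σ_{i+1})πₙ(σᵢ) = πₙ(σ_{i+1})πₙ(σᵢ)πₙ(σ_{i+1}). -/

import Mathlib

open Matrix Complex

/-- The 4×4 matrix `R = (1/√2)·[[1,0,0,1],[0,1,-1,0],[0,1,1,0],[-1,0,0,1]]`. -/
noncomputable def R4 : Matrix (Fin 4) (Fin 4) ℂ :=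
  ((Real.sqrt 2 : ℝ) : ℂ)⁻¹ • !![1, 0, 0, 1; 0, 1, -1, 0; 0, 1, 1, 0; -1, 0, 0, 1]

/-- `R` as a matrix on `ℂ² ⊗ ℂ²`, indexed by pairs; `p.1` is the first tensor
factor (the paper's basis ordering makes the second factor the major index). -/
noncomputable def R : Matrix (Fin 2 × Fin 2) (Fin 2 × Fin 2) ℂ := fun p q =>
  R4 ⟨p.1.val + 2 * p.2.val, by have := p.1.isLt; have := p.2.isLt; omega⟩
     ⟨q.1.val + 2 * q.2.val, by have := q.1.isLt; have := q.2.isLt; omega⟩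

/-- The operator `I₂^{⊗ i} ⊗ M ⊗ I₂^{⊗ (n-i-2)}` acting on `(ℂ²)^{⊗ n}`
(0-indexed: `M` acts on tensor factors `i` and `i+1`). -/
noncomputable def pairOp (n i : ℕ) (M : Matrix (Fin 2 × Fin 2) (Fin 2 × Fin 2) ℂ) :
    Matrix (Fin n → Fin 2) (Fin n → Fin 2) ℂ :=
  if h : i + 1 < n then fun x y =>
    M (x ⟨i, Nat.lt_of_succ_lt h⟩, x ⟨i + 1, h⟩) (y ⟨i, Nat.lt_of_succ_lt h⟩, y ⟨i + 1, h⟩) *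
      ∏ j : Fin n, if (j : ℕ) = i ∨ (j : ℕ) = i + 1 then 1 else if x j = y j then 1 else 0
  else 0

/-- `piRep n i = I₂^{⊗ i} ⊗ R ⊗ I₂^{⊗ (n-i-2)}` (0-indexed: `piRep n i` is the
paper's `πₙ(σ_{i+1})`). -/
noncomputable def piRep (n i : ℕ) : Matrix (Fin n → Fin 2) (Fin n → Fin 2) ℂ :=
  pairOp n i R

open Finset

variable {n i : ℕ}

def epair (n i : ℕ) (x : Fin n → Fin 2) (p : Fin 2 × Fin 2) : Fin n → Fin 2 :=
  fun j => if (j : ℕ) = i then p.1 else if (j : ℕ) = i + 1 then p.2 else x j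

lemma epair_at_i (h : i + 1 < n) (x : Fin n → Fin 2) (p) :
    epair n i x p ⟨i, Nat.lt_of_succ_lt h⟩ = p.1 := by simp [epair]

lemma epair_at_i1 (h : i + 1 < n) (x : Fin n → Fin 2) (p) :
    epair n i x p ⟨i + 1, h⟩ = p.2 := by simp [epair]

lemma epair_at_ne (x : Fin n → Fin 2) (p) (j : Fin n) (h1 : (j:ℕ) ≠ i) (h2 : (j:ℕ) ≠ i+1) :
    epair n i x p j = x j := by simp [epair, h1, h2]

lemma sum_epair (h : i + 1 < n) (x : Fin n → Fin 2) (F : (Fin n → Fin 2) → ℂ)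
    (hF : ∀ z, F z ≠ 0 → ∀ j : Fin n, (j:ℕ) ≠ i → (j:ℕ) ≠ i+1 → z j = x j) :
    ∑ z, F z = ∑ p : Fin 2 × Fin 2, F (epair n i x p) := by
  have hinj : ∀ p ∈ (univ : Finset (Fin 2 × Fin 2)), ∀ q ∈ univ,
      epair n i x p = epair n i x q → p = q := by
    intro p _ q _ hpq
    have h1 := congrFun hpq ⟨i, Nat.lt_of_succ_lt h⟩
    have h2 := congrFun hpq ⟨i + 1, h⟩
    rw [epair_at_i h, epair_at_i h] at h1
    rw [epair_at_i1 h, epair_at_i1 h] at h2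
    exact Prod.ext h1 h2
  calc ∑ z, F z = ∑ z ∈ univ.image (epair n i x), F z := by
        refine (Finset.sum_subset (Finset.subset_univ _) ?_).symm
        intro z _ hz
        by_contra hFz
        apply hz
        refine Finset.mem_image.2 ⟨(z ⟨i, Nat.lt_of_succ_lt h⟩, z ⟨i+1, h⟩), mem_univ _, ?_⟩
        funext j
        by_cases hj1 : (j:ℕ) = i
        · have : j = ⟨i, Nat.lt_of_succ_lt h⟩ := Fin.ext hj1
          rw [this, epair_at_i h]
        · by_cases hj2 : (j:ℕ) = i + 1
          · have : j = ⟨i+1, h⟩ := Fin.ext hj2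
            rw [this, epair_at_i1 h]
          · rw [epair_at_ne x _ j hj1 hj2]
            exact (hF z hFz j hj1 hj2).symm
    _ = ∑ p : Fin 2 × Fin 2, F (epair n i x p) := Finset.sum_image hinj

lemma prod_delta_ne_zero {x z : Fin n → Fin 2} {P : ℕ → Prop} [DecidablePred P]
    (h : (∏ j : Fin n, if P (j:ℕ) then (1:ℂ) else if x j = z j then 1 else 0) ≠ 0)
    (j : Fin n) (hj : ¬ P (j:ℕ)) : x j = z j := by
  by_contra hne
  exact h (Finset.prod_eq_zero (Finset.mem_univ j) (by simp [hj, hne]))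

open Finset in
lemma pairOp_apply {n i : ℕ} (h : i + 1 < n) (M) (x y : Fin n → Fin 2) :
    pairOp n i M x y =
    M (x ⟨i, Nat.lt_of_succ_lt h⟩, x ⟨i + 1, h⟩) (y ⟨i, Nat.lt_of_succ_lt h⟩, y ⟨i + 1, h⟩) *
      ∏ j : Fin n, if (j : ℕ) = i ∨ (j : ℕ) = i + 1 then 1 else if x j = y j then 1 else 0 := by
  exact congrFun (congrFun (dif_pos h : pairOp n i M = _) x) y

open Finset in
lemma pairOp_mul {n i : ℕ} (M N) : pairOp n i M * pairOp n i N = pairOp n i (M * N) := by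
  by_cases h : i + 1 < n
  · ext x y
    rw [Matrix.mul_apply]
    simp only [pairOp_apply h]
    rw [sum_epair h x]
    · rw [Matrix.mul_apply, Finset.sum_mul]
      refine Finset.sum_congr rfl fun p _ => ?_
      have e1 := epair_at_i h x p
      have e2 := epair_at_i1 h x p
      have hd1 : (∏ j : Fin n, if (j : ℕ) = i ∨ (j : ℕ) = i + 1 then (1:ℂ)
          else if x j = epair n i x p j then 1 else 0) = 1 := by
        refine Finset.prod_eq_one fun j _ => ?_
        by_cases hj : (j:ℕ) = i ∨ (j:ℕ) = i + 1
        · simp [hj]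
        · push_neg at hj
          simp [hj.1, hj.2, epair_at_ne x p j hj.1 hj.2]
      have hd2 : (∏ j : Fin n, if (j : ℕ) = i ∨ (j : ℕ) = i + 1 then (1:ℂ)
          else if epair n i x p j = y j then 1 else 0) =
          ∏ j : Fin n, if (j : ℕ) = i ∨ (j : ℕ) = i + 1 then (1:ℂ)
          else if x j = y j then 1 else 0 := by
        refine Finset.prod_congr rfl fun j _ => ?_
        by_cases hj : (j:ℕ) = i ∨ (j:ℕ) = i + 1
        · simp [hj]
        · push_neg at hj
          rw [epair_at_ne x p j hj.1 hj.2]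
      rw [e1, e2, hd1, hd2]
      ring
    · intro z hz j hj1 hj2
      have hδ : (∏ j : Fin n, if (j : ℕ) = i ∨ (j : ℕ) = i + 1 then (1:ℂ)
          else if x j = z j then 1 else 0) ≠ 0 := by
        intro h0
        apply hz
        rw [h0]
        ring
      exact (prod_delta_ne_zero (P := fun k => k = i ∨ k = i + 1) hδ j (by tauto)).symm
  · have e : ∀ K, pairOp n i K = 0 := fun K => dif_neg h
    rw [e, e, e, zero_mul]

open Finset in
lemma pairOp_one {n i : ℕ} (h : i + 1 < n) :
    pairOp n i (1 : Matrix (Fin 2 × Fin 2) (Fin 2 × Fin 2) ℂ) = 1 := by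
  ext x y
  rw [pairOp_apply h, Matrix.one_apply, Matrix.one_apply]
  by_cases hxy : x = y
  · subst hxy; simp
  · rw [if_neg hxy]
    have : ∃ j : Fin n, x j ≠ y j := by
      by_contra hc
      push_neg at hc
      exact hxy (funext hc)
    obtain ⟨j, hj⟩ := this
    by_cases hji : (j:ℕ) = i ∨ (j:ℕ) = i + 1
    · have hne : (x ⟨i, Nat.lt_of_succ_lt h⟩, x ⟨i + 1, h⟩) ≠
          (y ⟨i, Nat.lt_of_succ_lt h⟩, y ⟨i + 1, h⟩) := by
        rcases hji with hji | hji
        · have : j = (⟨i, Nat.lt_of_succ_lt h⟩ : Fin n) := Fin.ext hji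
          subst this
          exact fun hc => hj (congrArg Prod.fst hc)
        · have : j = (⟨i + 1, h⟩ : Fin n) := Fin.ext hji
          subst this
          exact fun hc => hj (congrArg Prod.snd hc)
      rw [if_neg hne]
      ring
    · rw [Finset.prod_eq_zero (Finset.mem_univ j) (by simp [hji, hj])]
      ring

/-! ### Triple-site operators -/

noncomputable def tripOp (n i : ℕ)
    (T : Matrix (Fin 2 × Fin 2 × Fin 2) (Fin 2 × Fin 2 × Fin 2) ℂ) :
    Matrix (Fin n → Fin 2) (Fin n → Fin 2) ℂ :=
  if h : i + 2 < n then fun x y =>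
    T (x ⟨i, by omega⟩, x ⟨i + 1, by omega⟩, x ⟨i + 2, h⟩)
      (y ⟨i, by omega⟩, y ⟨i + 1, by omega⟩, y ⟨i + 2, h⟩) *
      ∏ j : Fin n, if (j : ℕ) = i ∨ (j : ℕ) = i + 1 ∨ (j : ℕ) = i + 2 then 1
        else if x j = y j then 1 else 0
  else 0

lemma tripOp_apply {n i : ℕ} (h : i + 2 < n) (T) (x y : Fin n → Fin 2) :
    tripOp n i T x y =
    T (x ⟨i, by omega⟩, x ⟨i + 1, by omega⟩, x ⟨i + 2, h⟩)
      (y ⟨i, by omega⟩, y ⟨i + 1, by omega⟩, y ⟨i + 2, h⟩) *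
      ∏ j : Fin n, if (j : ℕ) = i ∨ (j : ℕ) = i + 1 ∨ (j : ℕ) = i + 2 then 1
        else if x j = y j then 1 else 0 := by
  exact congrFun (congrFun (dif_pos h : tripOp n i T = _) x) y

def etrip (n i : ℕ) (x : Fin n → Fin 2) (p : Fin 2 × Fin 2 × Fin 2) : Fin n → Fin 2 :=
  fun j => if (j : ℕ) = i then p.1 else if (j : ℕ) = i + 1 then p.2.1
    else if (j : ℕ) = i + 2 then p.2.2 else x j

lemma etrip_at_i {n i : ℕ} (h : i + 2 < n) (x : Fin n → Fin 2) (p) :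
    etrip n i x p ⟨i, by omega⟩ = p.1 := by simp [etrip]

lemma etrip_at_i1 {n i : ℕ} (h : i + 2 < n) (x : Fin n → Fin 2) (p) :
    etrip n i x p ⟨i + 1, by omega⟩ = p.2.1 := by simp [etrip]

lemma etrip_at_i2 {n i : ℕ} (h : i + 2 < n) (x : Fin n → Fin 2) (p) :
    etrip n i x p ⟨i + 2, h⟩ = p.2.2 := by simp [etrip]

lemma etrip_at_ne {n i : ℕ} (x : Fin n → Fin 2) (p) (j : Fin n)
    (h1 : (j:ℕ) ≠ i) (h2 : (j:ℕ) ≠ i+1) (h3 : (j:ℕ) ≠ i+2) :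
    etrip n i x p j = x j := by simp [etrip, h1, h2, h3]

lemma sum_etrip {n i : ℕ} (h : i + 2 < n) (x : Fin n → Fin 2) (F : (Fin n → Fin 2) → ℂ)
    (hF : ∀ z, F z ≠ 0 → ∀ j : Fin n, (j:ℕ) ≠ i → (j:ℕ) ≠ i+1 → (j:ℕ) ≠ i+2 → z j = x j) :
    ∑ z, F z = ∑ p : Fin 2 × Fin 2 × Fin 2, F (etrip n i x p) := by
  have hinj : ∀ p ∈ (univ : Finset (Fin 2 × Fin 2 × Fin 2)), ∀ q ∈ univ,
      etrip n i x p = etrip n i x q → p = q := by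
    intro p _ q _ hpq
    have h1 := congrFun hpq ⟨i, by omega⟩
    have h2 := congrFun hpq ⟨i + 1, by omega⟩
    have h3 := congrFun hpq ⟨i + 2, h⟩
    rw [etrip_at_i h, etrip_at_i h] at h1
    rw [etrip_at_i1 h, etrip_at_i1 h] at h2
    rw [etrip_at_i2 h, etrip_at_i2 h] at h3
    exact Prod.ext h1 (Prod.ext h2 h3)
  calc ∑ z, F z = ∑ z ∈ univ.image (etrip n i x), F z := by
        refine (Finset.sum_subset (Finset.subset_univ _) ?_).symm
        intro z _ hz
        by_contra hFz
        apply hz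
        refine Finset.mem_image.2
          ⟨(z ⟨i, by omega⟩, z ⟨i+1, by omega⟩, z ⟨i+2, h⟩), mem_univ _, ?_⟩
        funext j
        by_cases hj1 : (j:ℕ) = i
        · have : j = (⟨i, by omega⟩ : Fin n) := Fin.ext hj1
          rw [this, etrip_at_i h]
        · by_cases hj2 : (j:ℕ) = i + 1
          · have : j = (⟨i+1, by omega⟩ : Fin n) := Fin.ext hj2
            rw [this, etrip_at_i1 h]
          · by_cases hj3 : (j:ℕ) = i + 2
            · have : j = (⟨i+2, h⟩ : Fin n) := Fin.ext hj3
              rw [this, etrip_at_i2 h]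
            · rw [etrip_at_ne x _ j hj1 hj2 hj3]
              exact (hF z hFz j hj1 hj2 hj3).symm
    _ = _ := Finset.sum_image hinj

lemma tripOp_mul {n i : ℕ} (h : i + 2 < n) (S T) :
    tripOp n i S * tripOp n i T = tripOp n i (S * T) := by
  ext x y
  rw [Matrix.mul_apply]
  simp only [tripOp_apply h]
  rw [sum_etrip h x]
  · rw [Matrix.mul_apply, Finset.sum_mul]
    refine Finset.sum_congr rfl fun p _ => ?_
    have e1 := etrip_at_i h x p
    have e2 := etrip_at_i1 h x p
    have e3 := etrip_at_i2 h x p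
    have hd1 : (∏ j : Fin n, if (j : ℕ) = i ∨ (j : ℕ) = i + 1 ∨ (j : ℕ) = i + 2 then (1:ℂ)
        else if x j = etrip n i x p j then 1 else 0) = 1 := by
      refine Finset.prod_eq_one fun j _ => ?_
      by_cases hj : (j:ℕ) = i ∨ (j:ℕ) = i + 1 ∨ (j:ℕ) = i + 2
      · simp [hj]
      · push_neg at hj
        simp [hj.1, hj.2.1, hj.2.2, etrip_at_ne x p j hj.1 hj.2.1 hj.2.2]
    have hd2 : (∏ j : Fin n, if (j : ℕ) = i ∨ (j : ℕ) = i + 1 ∨ (j : ℕ) = i + 2 then (1:ℂ)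
        else if etrip n i x p j = y j then 1 else 0) =
        ∏ j : Fin n, if (j : ℕ) = i ∨ (j : ℕ) = i + 1 ∨ (j : ℕ) = i + 2 then (1:ℂ)
        else if x j = y j then 1 else 0 := by
      refine Finset.prod_congr rfl fun j _ => ?_
      by_cases hj : (j:ℕ) = i ∨ (j:ℕ) = i + 1 ∨ (j:ℕ) = i + 2
      · simp [hj]
      · push_neg at hj
        rw [etrip_at_ne x p j hj.1 hj.2.1 hj.2.2]
    rw [e1, e2, e3, hd1, hd2]
    ring
  · intro z hz j hj1 hj2 hj3
    have hδ : (∏ j : Fin n, if (j : ℕ) = i ∨ (j : ℕ) = i + 1 ∨ (j : ℕ) = i + 2 then (1:ℂ)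
        else if x j = z j then 1 else 0) ≠ 0 := by
      intro h0
      apply hz
      rw [h0]
      ring
    exact (prod_delta_ne_zero (P := fun k => k = i ∨ k = i + 1 ∨ k = i + 2) hδ j
      (by tauto)).symm

noncomputable def LC (M : Matrix (Fin 2 × Fin 2) (Fin 2 × Fin 2) ℂ) :
    Matrix (Fin 2 × Fin 2 × Fin 2) (Fin 2 × Fin 2 × Fin 2) ℂ := fun p q =>
  M (p.1, p.2.1) (q.1, q.2.1) * (if p.2.2 = q.2.2 then 1 else 0)

noncomputable def UC (M : Matrix (Fin 2 × Fin 2) (Fin 2 × Fin 2) ℂ) :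
    Matrix (Fin 2 × Fin 2 × Fin 2) (Fin 2 × Fin 2 × Fin 2) ℂ := fun p q =>
  (if p.1 = q.1 then 1 else 0) * M (p.2.1, p.2.2) (q.2.1, q.2.2)

lemma pairOp_eq_tripOp_L {n i : ℕ} (h : i + 2 < n) (M) :
    pairOp n i M = tripOp n i (LC M) := by
  ext x y
  rw [pairOp_apply (by omega : i + 1 < n), tripOp_apply h]
  set a : Fin n := ⟨i + 2, h⟩ with ha
  have key : (∏ j : Fin n, if (j : ℕ) = i ∨ (j : ℕ) = i + 1 then (1:ℂ)
      else if x j = y j then 1 else 0) =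
      (if x a = y a then (1:ℂ) else 0) *
      ∏ j : Fin n, if (j : ℕ) = i ∨ (j : ℕ) = i + 1 ∨ (j : ℕ) = i + 2 then (1:ℂ)
        else if x j = y j then 1 else 0 := by
    rw [← Finset.mul_prod_erase univ _ (Finset.mem_univ a),
        ← Finset.mul_prod_erase univ
          (fun j : Fin n => if (j : ℕ) = i ∨ (j : ℕ) = i + 1 ∨ (j : ℕ) = i + 2 then (1:ℂ)
            else if x j = y j then 1 else 0) (Finset.mem_univ a)]
    rw [if_neg (show ¬(i + 2 = i ∨ i + 2 = i + 1) by omega),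
        if_pos (show i + 2 = i ∨ i + 2 = i + 1 ∨ i + 2 = i + 2 from Or.inr (Or.inr rfl)),
        one_mul]
    refine congrArg _ (Finset.prod_congr rfl fun j hj => ?_)
    have hja : j ≠ a := Finset.ne_of_mem_erase hj
    have hj2 : (j:ℕ) ≠ i + 2 := fun hc => hja (Fin.ext (by simp [ha, hc]))
    by_cases hji : (j:ℕ) = i ∨ (j:ℕ) = i + 1
    · rw [if_pos hji, if_pos (by tauto)]
    · push_neg at hji
      simp [hji.1, hji.2, hj2]
  rw [key, LC]
  ring

lemma pairOp_succ_eq_tripOp_U {n i : ℕ} (h : i + 2 < n) (M) :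
    pairOp n (i + 1) M = tripOp n i (UC M) := by
  ext x y
  rw [pairOp_apply (by omega : i + 1 + 1 < n), tripOp_apply h]
  set a : Fin n := ⟨i, by omega⟩ with ha
  have key : (∏ j : Fin n, if (j : ℕ) = i + 1 ∨ (j : ℕ) = i + 1 + 1 then (1:ℂ)
      else if x j = y j then 1 else 0) =
      (if x a = y a then (1:ℂ) else 0) *
      ∏ j : Fin n, if (j : ℕ) = i ∨ (j : ℕ) = i + 1 ∨ (j : ℕ) = i + 2 then (1:ℂ)
        else if x j = y j then 1 else 0 := by
    rw [← Finset.mul_prod_erase univ _ (Finset.mem_univ a),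
        ← Finset.mul_prod_erase univ
          (fun j : Fin n => if (j : ℕ) = i ∨ (j : ℕ) = i + 1 ∨ (j : ℕ) = i + 2 then (1:ℂ)
            else if x j = y j then 1 else 0) (Finset.mem_univ a)]
    rw [if_neg (show ¬(i = i + 1 ∨ i = i + 1 + 1) by omega),
        if_pos (show i = i ∨ i = i + 1 ∨ i = i + 2 from Or.inl rfl), one_mul]
    refine congrArg _ (Finset.prod_congr rfl fun j hj => ?_)
    have hja : j ≠ a := Finset.ne_of_mem_erase hj
    have hj0 : (j:ℕ) ≠ i := fun hc => hja (Fin.ext (by simp [ha, hc]))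
    by_cases hji : (j:ℕ) = i + 1 ∨ (j:ℕ) = i + 1 + 1
    · rw [if_pos hji, if_pos (by omega)]
    · push_neg at hji
      rw [if_neg (show ¬((j:ℕ) = i + 1 ∨ (j:ℕ) = i + 1 + 1) by omega),
          if_neg (show ¬((j:ℕ) = i ∨ (j:ℕ) = i + 1 ∨ (j:ℕ) = i + 2) by omega)]
  rw [key, UC]
  ring

/-! ### Integer-level computations -/

def M0 : Matrix (Fin 4) (Fin 4) ℤ := !![1,0,0,1;0,1,-1,0;0,1,1,0;-1,0,0,1]

def AZ : Matrix (Fin 2 × Fin 2) (Fin 2 × Fin 2) ℤ := fun p q =>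
  M0 ⟨p.1.val + 2 * p.2.val, by have := p.1.isLt; have := p.2.isLt; omega⟩
     ⟨q.1.val + 2 * q.2.val, by have := q.1.isLt; have := q.2.isLt; omega⟩

def LZ : Matrix (Fin 2 × Fin 2 × Fin 2) (Fin 2 × Fin 2 × Fin 2) ℤ := fun p q =>
  AZ (p.1, p.2.1) (q.1, q.2.1) * (if p.2.2 = q.2.2 then 1 else 0)

def UZ : Matrix (Fin 2 × Fin 2 × Fin 2) (Fin 2 × Fin 2 × Fin 2) ℤ := fun p q =>
  (if p.1 = q.1 then 1 else 0) * AZ (p.2.1, p.2.2) (q.2.1, q.2.2)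

lemma ybZ : LZ * UZ * LZ = UZ * LZ * UZ := by decide

lemma azL : AZ * AZ.transpose = (2:ℤ) • 1 := by decide

lemma azR : AZ.transpose * AZ = (2:ℤ) • 1 := by decide

noncomputable def c : ℂ := ((Real.sqrt 2 : ℝ) : ℂ)⁻¹

lemma hc : c * c * 2 = 1 := by
  have h2 : ((Real.sqrt 2 : ℝ) : ℂ) * ((Real.sqrt 2 : ℝ) : ℂ) = 2 := by
    rw [← Complex.ofReal_mul, Real.mul_self_sqrt (by norm_num)]
    norm_num
  rw [c, ← mul_inv, h2]
  norm_num

lemma hM0 : (!![1, 0, 0, 1; 0, 1, -1, 0; 0, 1, 1, 0; -1, 0, 0, 1] :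
    Matrix (Fin 4) (Fin 4) ℂ) = M0.map (Int.castRingHom ℂ) := by
  ext a b
  fin_cases a <;> fin_cases b <;> simp [M0]

lemma hR : R = c • (AZ.map (Int.castRingHom ℂ)) := by
  ext p q
  simp only [R, R4, Matrix.smul_apply, hM0, Matrix.map_apply, smul_eq_mul]
  rfl

noncomputable def Sinv : Matrix (Fin 2 × Fin 2) (Fin 2 × Fin 2) ℂ :=
  c • (AZ.transpose.map (Int.castRingHom ℂ))

lemma map2one : (((2:ℤ) • 1 : Matrix (Fin 2 × Fin 2) (Fin 2 × Fin 2) ℤ).map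
    (Int.castRingHom ℂ)) = (2:ℂ) • 1 := by
  ext p q
  simp only [Matrix.map_apply, Matrix.smul_apply, Matrix.one_apply, smul_eq_mul]
  by_cases h : p = q <;> simp [h]

lemma hRS : R * Sinv = 1 := by
  rw [hR, Sinv, smul_mul_assoc, mul_smul_comm, smul_smul, ← Matrix.map_mul, azL, map2one,
    smul_smul, hc, one_smul]

lemma hSR : Sinv * R = 1 := by
  rw [hR, Sinv, smul_mul_assoc, mul_smul_comm, smul_smul, ← Matrix.map_mul, azR, map2one,
    smul_smul, hc, one_smul]

lemma hLCR : LC R = c • (LZ.map (Int.castRingHom ℂ)) := by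
  ext p q
  simp only [LC, LZ, hR, Matrix.smul_apply, Matrix.map_apply, smul_eq_mul]
  rw [_root_.map_mul, apply_ite (Int.castRingHom ℂ)]
  simp only [_root_.map_one, _root_.map_zero]
  ring

lemma hUCR : UC R = c • (UZ.map (Int.castRingHom ℂ)) := by
  ext p q
  simp only [UC, UZ, hR, Matrix.smul_apply, Matrix.map_apply, smul_eq_mul]
  rw [_root_.map_mul, apply_ite (Int.castRingHom ℂ)]
  simp only [_root_.map_one, _root_.map_zero]
  ring

lemma braidC : LC R * UC R * LC R = UC R * LC R * UC R := by
  rw [hLCR, hUCR]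
  simp only [smul_mul_assoc, mul_smul_comm, smul_smul, ← Matrix.map_mul]
  rw [ybZ]

open Finset in
lemma pairOp_mul_disjoint {n i j : ℕ} (hi : i + 1 < n) (hj : j + 1 < n)
    (d1 : i ≠ j) (d2 : i + 1 ≠ j) (d3 : j + 1 ≠ i) (M N) (x y : Fin n → Fin 2) :
    (pairOp n i M * pairOp n j N) x y =
      M (x ⟨i, by omega⟩, x ⟨i + 1, hi⟩) (y ⟨i, by omega⟩, y ⟨i + 1, hi⟩) *
      N (x ⟨j, by omega⟩, x ⟨j + 1, hj⟩) (y ⟨j, by omega⟩, y ⟨j + 1, hj⟩) *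
      ∏ k : Fin n, if (k:ℕ) = i ∨ (k:ℕ) = i + 1 ∨ (k:ℕ) = j ∨ (k:ℕ) = j + 1 then 1
        else if x k = y k then 1 else 0 := by
  rw [Matrix.mul_apply]
  simp only [pairOp_apply hi, pairOp_apply hj]
  set z₀ : Fin n → Fin 2 := fun k => if (k:ℕ) = i ∨ (k:ℕ) = i + 1 then y k else x k with hz₀
  rw [Fintype.sum_eq_single z₀ ?_]
  · have ezi : z₀ ⟨i, by omega⟩ = y ⟨i, by omega⟩ := by simp [hz₀]
    have ezi1 : z₀ ⟨i + 1, hi⟩ = y ⟨i + 1, hi⟩ := by simp [hz₀]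
    have ezj : z₀ ⟨j, by omega⟩ = x ⟨j, by omega⟩ := by
      simp only [hz₀]
      rw [if_neg (show ¬(j = i ∨ j = i + 1) by omega)]
    have ezj1 : z₀ ⟨j + 1, hj⟩ = x ⟨j + 1, hj⟩ := by
      simp only [hz₀]
      rw [if_neg (show ¬(j + 1 = i ∨ j + 1 = i + 1) by omega)]
    rw [ezi, ezi1, ezj, ezj1]
    have hp1 : (∏ k : Fin n, if (k:ℕ) = i ∨ (k:ℕ) = i + 1 then (1:ℂ)
        else if x k = z₀ k then 1 else 0) = 1 := by
      refine Finset.prod_eq_one fun k _ => ?_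
      by_cases hk : (k:ℕ) = i ∨ (k:ℕ) = i + 1
      · rw [if_pos hk]
      · rw [if_neg hk]
        simp [hz₀, hk]
    have hp2 : (∏ k : Fin n, if (k:ℕ) = j ∨ (k:ℕ) = j + 1 then (1:ℂ)
        else if z₀ k = y k then 1 else 0) =
        ∏ k : Fin n, if (k:ℕ) = i ∨ (k:ℕ) = i + 1 ∨ (k:ℕ) = j ∨ (k:ℕ) = j + 1 then (1:ℂ)
        else if x k = y k then 1 else 0 := by
      refine Finset.prod_congr rfl fun k _ => ?_
      by_cases hk : (k:ℕ) = j ∨ (k:ℕ) = j + 1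
      · rw [if_pos hk,
          if_pos (show (k:ℕ) = i ∨ (k:ℕ) = i + 1 ∨ (k:ℕ) = j ∨ (k:ℕ) = j + 1 by tauto)]
      · by_cases hk2 : (k:ℕ) = i ∨ (k:ℕ) = i + 1
        · have : z₀ k = y k := by simp only [hz₀]; rw [if_pos hk2]
          rw [if_neg hk, if_pos this,
            if_pos (show (k:ℕ) = i ∨ (k:ℕ) = i + 1 ∨ (k:ℕ) = j ∨ (k:ℕ) = j + 1 by tauto)]
        · have : z₀ k = x k := by simp only [hz₀]; rw [if_neg hk2]
          rw [if_neg hk,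
            if_neg (show ¬((k:ℕ) = i ∨ (k:ℕ) = i + 1 ∨ (k:ℕ) = j ∨ (k:ℕ) = j + 1) by tauto),
            this]
    rw [hp1, hp2]
    ring
  · intro z hz
    have : ∃ k : Fin n, z k ≠ z₀ k := by
      by_contra hc
      push_neg at hc
      exact hz (funext hc)
    obtain ⟨k, hk⟩ := this
    by_cases hki : (k:ℕ) = i ∨ (k:ℕ) = i + 1
    · have hzk : z k ≠ y k := by
        intro hc
        apply hk
        rw [hc]
        simp only [hz₀]
        rw [if_pos hki]
      have h0 : (∏ k : Fin n, if (k:ℕ) = j ∨ (k:ℕ) = j + 1 then (1:ℂ)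
          else if z k = y k then 1 else 0) = 0 :=
        Finset.prod_eq_zero (Finset.mem_univ k)
          (by rw [if_neg (show ¬((k:ℕ) = j ∨ (k:ℕ) = j + 1) by omega), if_neg hzk])
      rw [h0]
      ring
    · have hzk : x k ≠ z k := by
        intro hc
        apply hk
        rw [← hc]
        simp only [hz₀]
        rw [if_neg hki]
      have h0 : (∏ k : Fin n, if (k:ℕ) = i ∨ (k:ℕ) = i + 1 then (1:ℂ)
          else if x k = z k then 1 else 0) = 0 :=
        Finset.prod_eq_zero (Finset.mem_univ k) (by rw [if_neg hki, if_neg hzk])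
      rw [h0]
      ring

/-- the matrices `πₙ(σᵢ) = I₂^{⊗(i−1)} ⊗ R ⊗ I₂^{⊗(n−i−1)}` are
invertible (so land in `GL(2ⁿ, ℂ)`) and satisfy the braid relations: far
commutation for `|i−j| ≥ 2` and `πₙ(σᵢ)πₙ(σ_{i+1})πₙ(σᵢ) = πₙ(σ_{i+1})πₙ(σᵢ)πₙ(σ_{i+1})`;
hence `σᵢ ↦ πₙ(σᵢ)` extends to a group homomorphism `Bₙ → GL(2ⁿ, ℂ)` (0-indexed). -/
theorem stmt11 (n : ℕ) :
    (∀ i, i + 2 ≤ n → IsUnit (piRep n i)) ∧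
    (∀ i j, i + 2 ≤ j → j + 2 ≤ n → piRep n i * piRep n j = piRep n j * piRep n i) ∧
    (∀ i, i + 3 ≤ n →
      piRep n i * piRep n (i + 1) * piRep n i =
        piRep n (i + 1) * piRep n i * piRep n (i + 1)) := by
  refine ⟨?_, ?_, ?_⟩
  · intro i hi
    have h : i + 1 < n := by omega
    exact ⟨⟨piRep n i, pairOp n i Sinv,
      by rw [piRep, pairOp_mul, hRS, pairOp_one h],
      by rw [piRep, pairOp_mul, hSR, pairOp_one h]⟩, rfl⟩
  · intro i j hij hjn
    ext x y
    rw [piRep, piRep,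
      pairOp_mul_disjoint (by omega) (by omega) (by omega) (by omega) (by omega) R R x y,
      pairOp_mul_disjoint (by omega) (by omega) (by omega) (by omega) (by omega) R R x y]
    have hprod : (∏ k : Fin n, if (k:ℕ) = i ∨ (k:ℕ) = i + 1 ∨ (k:ℕ) = j ∨ (k:ℕ) = j + 1
          then (1:ℂ) else if x k = y k then 1 else 0) =
        ∏ k : Fin n, if (k:ℕ) = j ∨ (k:ℕ) = j + 1 ∨ (k:ℕ) = i ∨ (k:ℕ) = i + 1
          then (1:ℂ) else if x k = y k then 1 else 0 :=
      Finset.prod_congr rfl fun k _ => if_congr (by tauto) rfl rfl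
    rw [hprod]
    ring
  · intro i hin
    have h : i + 2 < n := by omega
    simp only [piRep]
    rw [pairOp_eq_tripOp_L h, pairOp_succ_eq_tripOp_U h, tripOp_mul h, tripOp_mul h,
      tripOp_mul h, tripOp_mul h, braidC]
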